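/- Let I and J be ideals on ℕ and A = (a_{nk}) an infinite real matrix with Σ_k |a_{nk}| < ∞ for all n, I-lim Σ_k |a_{nk}| = 1 = I-lim Σ_k a_{nk}, and I-lim Σ_k |a_{nk}| χ_E(k) = 0 for every E ∈ J. Then for every bounded real sequence s = (s_n), I-limsup (As)(n) ≤ J-limsup s_n, where (As)(n) = Σ_k a_{nk} s_k. -/

import Mathlib

/-- An ideal on ℕ: nonempty collection of subsets, not containing ℕ,
closed under subsets and finite unions. -/
def IsIdeal (I : Set (Set ℕ)) : Prop :=
  I.Nonempty ∧ Set.univ ∉ I ∧ (∀ A ∈ I, ∀ B, B ⊆ A → B ∈ I) ∧ ∀ A ∈ I, ∀ B ∈ I, A ∪ B ∈ I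

/-- Convergence of `g n i` to `g0 i` along the ideal `I`, uniformly in `i ∈ S`. -/
def UnifConvAlong {S : Type*} (I : Set (Set ℕ)) (g : ℕ → S → ℝ) (g0 : S → ℝ) : Prop :=
  ∀ ε > 0, ∃ E ∈ I, ∀ i : S, {n : ℕ | ε ≤ |g n i - g0 i|} ⊆ E

/-- The collection `J_{B,I}` of sets `K ⊆ ℕ` whose matrix transforms tend to 0 along `I`
uniformly in `i ∈ S`. -/
def matIdeal {S : Type*} (I : Set (Set ℕ)) (b : S → ℕ → ℕ → ℝ) : Set (Set ℕ) :=
  {K : Set ℕ | UnifConvAlong I (fun n i => ∑' k, b i n k * K.indicator 1 k) (fun _ => 0)}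

/-- `I`-limit superior of a real sequence. -/
noncomputable def idealLimSup (I : Set (Set ℕ)) (s : ℕ → ℝ) : ℝ :=
  sSup {t : ℝ | {n : ℕ | t < s n} ∉ I}

/-- `I`-limit inferior of a real sequence. -/
noncomputable def idealLimInf (I : Set (Set ℕ)) (s : ℕ → ℝ) : ℝ :=
  sInf {t : ℝ | {n : ℕ | s n < t} ∉ I}

/-- `I`-convergence of a real sequence to `a`. -/
def IdealConv (I : Set (Set ℕ)) (s : ℕ → ℝ) (a : ℝ) : Prop :=
  ∀ ε > 0, {n : ℕ | ε ≤ |s n - a|} ∈ I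

/-- `B^I`-statistical convergence of `s` to `a`. -/
def BStatConv {S : Type*} (I : Set (Set ℕ)) (b : S → ℕ → ℕ → ℝ) (s : ℕ → ℝ) (a : ℝ) : Prop :=
  ∀ ε > 0, UnifConvAlong I
    (fun n i => ∑' k, b i n k * Set.indicator {k : ℕ | ε ≤ |s k - a|} 1 k) (fun _ => 0)

lemma ideal_empty {I : Set (Set ℕ)} (hI : IsIdeal I) : (∅ : Set ℕ) ∈ I := by
  obtain ⟨⟨A, hA⟩, -, hdown, -⟩ := hI
  exact hdown A hA ∅ (Set.empty_subset A)

lemma ideal_mem_of_subset {I : Set (Set ℕ)} (hI : IsIdeal I) {E F : Set ℕ}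
    (hE : E ∈ I) (h : F ⊆ E) : F ∈ I := hI.2.2.1 E hE F h

lemma IdealConv.add' {I : Set (Set ℕ)} (hI : IsIdeal I) {f g : ℕ → ℝ} {a b : ℝ}
    (hf : IdealConv I f a) (hg : IdealConv I g b) :
    IdealConv I (fun n => f n + g n) (a + b) := by
  intro ε hε
  have h2 : (0:ℝ) < ε/2 := by linarith
  refine ideal_mem_of_subset hI (hI.2.2.2 _ (hf (ε/2) h2) _ (hg (ε/2) h2)) ?_
  intro n hn
  simp only [Set.mem_setOf_eq] at hn
  by_contra hc
  simp only [Set.mem_union, Set.mem_setOf_eq, not_or, not_le] at hc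
  have habs := abs_add_le (f n - a) (g n - b)
  have h3 : f n + g n - (a + b) = (f n - a) + (g n - b) := by ring
  rw [h3] at hn
  linarith [hc.1, hc.2]

lemma IdealConv.const_mul' {I : Set (Set ℕ)} (hI : IsIdeal I) {f : ℕ → ℝ} {a : ℝ} (c : ℝ)
    (hf : IdealConv I f a) : IdealConv I (fun n => c * f n) (c * a) := by
  intro ε hε
  rcases eq_or_ne c 0 with rfl | hc
  · have : {n : ℕ | ε ≤ |(0:ℝ) * f n - 0 * a|} = ∅ := by
      ext n; simp; linarith
    rw [this]; exact ideal_empty hI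
  · have hcp : 0 < |c| := abs_pos.mpr hc
    refine ideal_mem_of_subset hI (hf (ε/|c|) (by positivity)) ?_
    intro n hn
    simp only [Set.mem_setOf_eq] at hn ⊢
    have he : c * f n - c * a = c * (f n - a) := by ring
    rw [he, abs_mul] at hn
    rw [div_le_iff₀ hcp, mul_comm]
    exact hn

/-- `I-limsup (As) ≤ J-limsup s` for bounded `s`, under conditions (3.1)–(3.3). -/
theorem stmt8 (I J : Set (Set ℕ)) (hI : IsIdeal I) (hJ : IsIdeal J)
    (A : ℕ → ℕ → ℝ) (habs : ∀ n, Summable fun k => |A n k|)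
    (h1 : IdealConv I (fun n => ∑' k, |A n k|) 1)
    (h2 : IdealConv I (fun n => ∑' k, A n k) 1)
    (h3 : ∀ E ∈ J, IdealConv I (fun n => ∑' k, |A n k| * E.indicator 1 k) 0)
    (s : ℕ → ℝ) (hbdd : ∃ R : ℝ, ∀ n, |s n| ≤ R) :
    idealLimSup I (fun n => ∑' k, A n k * s k) ≤ idealLimSup J s := by
  obtain ⟨R, hR⟩ := hbdd
  have hR0 : 0 ≤ R := le_trans (abs_nonneg _) (hR 0)
  -- J-side set bounded above by R
  have hTJbdd : BddAbove {t : ℝ | {n : ℕ | t < s n} ∉ J} := by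
    refine ⟨R, fun t ht => ?_⟩
    by_contra h
    push_neg at h
    apply ht
    have : {n : ℕ | t < s n} = ∅ := by
      ext n
      simp only [Set.mem_setOf_eq, Set.mem_empty_iff_false, iff_false, not_lt]
      exact le_trans (le_trans (le_abs_self _) (hR n)) h.le
    rw [this]
    exact ideal_empty hJ
  -- key lemma
  have key : ∀ t : ℝ, idealLimSup J s < t → {n : ℕ | t < ∑' k, A n k * s k} ∈ I := by
    intro t ht
    set L := idealLimSup J s with hL
    set u := (L + t) / 2 with hu
    have hu1 : L < u := by rw [hu]; linarith
    have hu2 : u < t := by rw [hu]; linarith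
    set K := {k : ℕ | u < s k} with hKdef
    have hK : K ∈ J := by
      by_contra hKc
      have : u ≤ L := le_csSup hTJbdd hKc
      linarith
    set C := R + |u| with hC
    have hC0 : 0 ≤ C := by positivity
    -- the dominating sequence
    have hconv : IdealConv I
        (fun n => (u+R)/2 * (∑' k, |A n k|) +
          (((u-R)/2) * (∑' k, A n k) + C * (∑' k, |A n k| * K.indicator 1 k)))
        ((u+R)/2 * 1 + (((u-R)/2) * 1 + C * 0)) :=
      IdealConv.add' hI (IdealConv.const_mul' hI _ h1)
        (IdealConv.add' hI (IdealConv.const_mul' hI _ h2)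
          (IdealConv.const_mul' hI _ (h3 K hK)))
    have hlim : (u+R)/2 * 1 + (((u-R)/2) * 1 + C * 0) = u := by ring
    rw [hlim] at hconv
    -- pointwise bound
    have hbound : ∀ n, (∑' k, A n k * s k) ≤
        (u+R)/2 * (∑' k, |A n k|) +
          (((u-R)/2) * (∑' k, A n k) + C * (∑' k, |A n k| * K.indicator 1 k)) := by
      intro n
      have ha := habs n
      have haA : Summable (fun k => A n k) := ha.of_abs
      have hasabs : Summable (fun k => |A n k * s k|) := by
        refine Summable.of_nonneg_of_le (fun k => abs_nonneg _) (fun k => ?_) (ha.mul_right R)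
        rw [abs_mul]
        exact mul_le_mul_of_nonneg_left (hR k) (abs_nonneg _)
      have has : Summable (fun k => A n k * s k) := hasabs.of_abs
      have hχ : Summable (fun k => |A n k| * K.indicator 1 k) := by
        refine Summable.of_nonneg_of_le (fun k => ?_) (fun k => ?_) ha
        · exact mul_nonneg (abs_nonneg _) (Set.indicator_nonneg (fun _ _ => zero_le_one) _)
        · by_cases hk : k ∈ K
          · simp [Set.indicator_of_mem hk]
          · simp [Set.indicator_of_notMem hk, abs_nonneg]
      have hterm : ∀ k, A n k * s k ≤
          (u+R)/2 * |A n k| + (((u-R)/2) * A n k + C * (|A n k| * K.indicator 1 k)) := by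
        intro k
        by_cases hk : k ∈ K
        · rw [Set.indicator_of_mem hk]
          simp only [Pi.one_apply]
          have hAs : A n k * s k ≤ |A n k| * R := by
            calc A n k * s k ≤ |A n k * s k| := le_abs_self _
              _ = |A n k| * |s k| := abs_mul _ _
              _ ≤ |A n k| * R := mul_le_mul_of_nonneg_left (hR k) (abs_nonneg _)
          have h1' := le_abs_self (A n k)
          have h2' := neg_abs_le (A n k)
          have h3' := le_abs_self u
          have h4' := neg_abs_le u
          have h5' := abs_nonneg (A n k)
          nlinarith [mul_nonneg (by linarith : (0:ℝ) ≤ |u| + u) (by linarith : (0:ℝ) ≤ |A n k| + A n k),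
            mul_nonneg (by linarith : (0:ℝ) ≤ |u|) (by linarith : (0:ℝ) ≤ |A n k| - A n k),
            mul_nonneg hR0 (by linarith : (0:ℝ) ≤ |A n k| - A n k)]
        · rw [Set.indicator_of_notMem hk]
          have hsu : s k ≤ u := not_lt.mp hk
          have hsR : -R ≤ s k := neg_le_of_abs_le (hR k)
          have h1' := le_abs_self (A n k)
          have h2' := neg_abs_le (A n k)
          nlinarith [mul_le_mul_of_nonneg_left hsu (by linarith : (0:ℝ) ≤ |A n k| + A n k),
            mul_le_mul_of_nonneg_left hsR (by linarith : (0:ℝ) ≤ |A n k| - A n k)]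
      calc (∑' k, A n k * s k)
          ≤ ∑' k, ((u+R)/2 * |A n k| + (((u-R)/2) * A n k + C * (|A n k| * K.indicator 1 k))) :=
            Summable.tsum_le_tsum hterm has
              ((ha.mul_left _).add ((haA.mul_left _).add (hχ.mul_left _)))
        _ = (u+R)/2 * (∑' k, |A n k|) +
              (((u-R)/2) * (∑' k, A n k) + C * (∑' k, |A n k| * K.indicator 1 k)) := by
            rw [Summable.tsum_add (ha.mul_left _) ((haA.mul_left _).add (hχ.mul_left _)),
              Summable.tsum_add (haA.mul_left _) (hχ.mul_left _),
              tsum_mul_left, tsum_mul_left, tsum_mul_left]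
    -- conclude
    have hε : (0:ℝ) < t - u := by linarith
    refine ideal_mem_of_subset hI (hconv (t - u) hε) ?_
    intro n hn
    simp only [Set.mem_setOf_eq] at hn ⊢
    have hf := hbound n
    have : t - u ≤ (((u+R)/2 * (∑' k, |A n k|) +
          (((u-R)/2) * (∑' k, A n k) + C * (∑' k, |A n k| * K.indicator 1 k)))) - u := by
      linarith
    exact le_trans this (le_abs_self _)
  -- nonemptiness of the I-side set
  have hne : Set.Nonempty {t : ℝ | {n : ℕ | t < ∑' k, A n k * s k} ∉ I} := by
    refine ⟨-(2*R+1), fun hmem => ?_⟩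
    have hE1 := h1 1 one_pos
    have hU := hI.2.2.2 _ hmem _ hE1
    have hneq : ({n : ℕ | -(2*R+1) < ∑' k, A n k * s k} ∪
        {n : ℕ | 1 ≤ |(∑' k, |A n k|) - 1|}) ≠ Set.univ := fun h => hI.2.1 (h ▸ hU)
    obtain ⟨n, hn⟩ := Set.ne_univ_iff_exists_notMem _ |>.mp hneq
    simp only [Set.mem_union, Set.mem_setOf_eq, not_or, not_lt, not_le] at hn
    obtain ⟨hn1, hn2⟩ := hn
    have hS1 : (∑' k, |A n k|) < 2 := by
      have := abs_lt.mp hn2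
      linarith [this.2]
    have ha := habs n
    have hasabs : Summable (fun k => |A n k * s k|) := by
      refine Summable.of_nonneg_of_le (fun k => abs_nonneg _) (fun k => ?_) (ha.mul_right R)
      rw [abs_mul]
      exact mul_le_mul_of_nonneg_left (hR k) (abs_nonneg _)
    have hb1 : |∑' k, A n k * s k| ≤ ∑' k, |A n k * s k| := by
      have hs' : Summable fun k => ‖A n k * s k‖ := by
        simpa only [Real.norm_eq_abs] using hasabs
      simpa only [Real.norm_eq_abs] using norm_tsum_le_tsum_norm (f := fun k => A n k * s k) hs'
    have hb2 : (∑' k, |A n k * s k|) ≤ (∑' k, |A n k|) * R := by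
      rw [← tsum_mul_right]
      refine Summable.tsum_le_tsum (fun k => ?_) hasabs (ha.mul_right R)
      rw [abs_mul]
      exact mul_le_mul_of_nonneg_left (hR k) (abs_nonneg _)
    have hS1R : (∑' k, |A n k|) * R ≤ 2 * R := by nlinarith [tsum_nonneg (L := SummationFilter.unconditional ℕ) (fun k => abs_nonneg (A n k))]
    have := neg_abs_le (∑' k, A n k * s k)
    linarith
  -- finish
  unfold idealLimSup
  refine csSup_le hne fun t ht => ?_
  by_contra h
  push_neg at h
  exact ht (key t h)
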